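/- arXiv:2201.12788 — 2 statements merged into one kernel-verified Lean document; each statement's English description precedes it below -/
import Mathlib

section
/- Let α > 0, ω = (ω₁,ω₂,ω₃) ∈ S² and λ ∈ ℝ with ⟨z₁, ω⟩ > λ, where z₁ = (0,α,0). If the reflection T_{λ,ω}(z₁) = z₁ − 2ω(⟨ω,z₁⟩ − λ) lies in K^α, then |ω₃| ≤ −α ω₁ ≤ ω₂ and α ≥ (ω₂ − α ω₁)(⟨z₁,ω⟩ − λ); in particular ω₁ ≤ 0 ≤ ω₂. -/
open scoped RealInnerProductSpace

/-- A point of ℝ³. -/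
noncomputable def pt3 (a b c : ℝ) : EuclideanSpace ℝ (Fin 3) :=
  (WithLp.equiv 2 (Fin 3 → ℝ)).symm ![a, b, c]

/-- The tetrahedron `K^α = {x : |x₃| ≤ α x₁, |x₂| ≤ α(1 - x₁)}`. -/
noncomputable def Kα (α : ℝ) : Set (EuclideanSpace ℝ (Fin 3)) :=
  {x | |x 2| ≤ α * x 0 ∧ |x 1| ≤ α * (1 - x 0)}

/-- The reflection `T_{λ,ω}(x) = x - 2ω(⟨ω,x⟩ - λ)`. -/
noncomputable def reflMap (ω : EuclideanSpace ℝ (Fin 3)) (lam : ℝ)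
    (x : EuclideanSpace ℝ (Fin 3)) : EuclideanSpace ℝ (Fin 3) :=
  x - (2 * (⟪ω, x⟫ - lam)) • ω

lemma pt3_apply (a b c : ℝ) : pt3 a b c 0 = a ∧ pt3 a b c 1 = b ∧ pt3 a b c 2 = c := by
  refine ⟨rfl, rfl, rfl⟩

lemma inner_pt3 (a b c : ℝ) (ω : EuclideanSpace ℝ (Fin 3)) :
    ⟪pt3 a b c, ω⟫ = a * ω 0 + b * ω 1 + c * ω 2 := by
  simp [pt3, PiLp.inner_apply, Fin.sum_univ_three]; ring

/-- If `⟨z₁, ω⟩ > λ` and `T_{λ,ω}(z₁) ∈ K^α` with `z₁ = (0,α,0)`, then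
`|ω₃| ≤ -α ω₁ ≤ ω₂` and `α ≥ (ω₂ - α ω₁)(⟨z₁,ω⟩ - λ)`; in particular `ω₁ ≤ 0 ≤ ω₂`. -/
theorem reflect_z1_conditions (α : ℝ) (hα : 0 < α)
    (ω : EuclideanSpace ℝ (Fin 3)) (hω : ‖ω‖ = 1) (lam : ℝ)
    (h1 : lam < ⟪pt3 0 α 0, ω⟫)
    (h2 : reflMap ω lam (pt3 0 α 0) ∈ Kα α) :
    |ω 2| ≤ -(α * ω 0) ∧ -(α * ω 0) ≤ ω 1 ∧
      (ω 1 - α * ω 0) * (⟪pt3 0 α 0, ω⟫ - lam) ≤ α ∧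
      ω 0 ≤ 0 ∧ 0 ≤ ω 1 := by
  have hinner : ⟪pt3 0 α 0, ω⟫ = α * ω 1 := by
    rw [inner_pt3]; ring
  have hinner' : ⟪ω, pt3 0 α 0⟫ = α * ω 1 := by
    rw [real_inner_comm]; exact hinner
  set t : ℝ := α * ω 1 - lam with ht
  have ht0 : 0 < t := by rw [ht]; linarith [hinner ▸ h1]
  obtain ⟨hA, hB⟩ := h2
  have hy0 : reflMap ω lam (pt3 0 α 0) 0 = -(2 * t * ω 0) := by
    have e : reflMap ω lam (pt3 0 α 0) 0
        = pt3 0 α 0 0 - (2 * (⟪ω, pt3 0 α 0⟫ - lam)) * ω 0 := rfl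
    rw [e, hinner']; simp [pt3]; exact Or.inl ht.symm
  have hy1 : reflMap ω lam (pt3 0 α 0) 1 = α - 2 * t * ω 1 := by
    have e : reflMap ω lam (pt3 0 α 0) 1
        = pt3 0 α 0 1 - (2 * (⟪ω, pt3 0 α 0⟫ - lam)) * ω 1 := rfl
    rw [e, hinner']; simp [pt3]; exact Or.inl ht.symm
  have hy2 : reflMap ω lam (pt3 0 α 0) 2 = -(2 * t * ω 2) := by
    have e : reflMap ω lam (pt3 0 α 0) 2
        = pt3 0 α 0 2 - (2 * (⟪ω, pt3 0 α 0⟫ - lam)) * ω 2 := rfl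
    rw [e, hinner']; simp [pt3]; exact Or.inl ht.symm
  rw [hy0, hy2] at hA
  rw [hy0, hy1] at hB
  rw [abs_neg, abs_mul, abs_of_pos (by linarith : (0:ℝ) < 2 * t)] at hA
  have h2t : (0:ℝ) < 2 * t := by linarith
  have hω2 : |ω 2| ≤ -(α * ω 0) := by
    nlinarith [abs_nonneg (ω 2)]
  have habs := abs_le.mp hB
  have hlow : -(α * ω 0) ≤ ω 1 := by nlinarith [habs.2]
  have hmid : (ω 1 - α * ω 0) * (⟪pt3 0 α 0, ω⟫ - lam) ≤ α := by
    rw [hinner] at h1 ⊢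
    nlinarith [habs.1]
  have hω0 : ω 0 ≤ 0 := by nlinarith [abs_nonneg (ω 2)]
  exact ⟨hω2, hlow, hmid, hω0, by nlinarith⟩
end

section
/- Let α > 0, ω ∈ S², λ ∈ ℝ with ⟨z₁,ω⟩ > λ and T_{λ,ω}(z₁) ∈ K^α, where z₁ = (0,α,0). If additionally ⟨z₂,ω⟩ > λ and T_{λ,ω}(z₂) ∈ K^α, where z₂ = (0,−α,0), then a contradiction follows (i.e., ω = 0, impossible for a unit vector). Consequently ⟨z₂,ω⟩ ≤ λ, hence −λ ≤ ⟨z₁,ω⟩, and sup{⟨z,ω⟩ : z ∈ K^α} = ⟨z₁,ω⟩. -/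
open scoped RealInnerProductSpace

/-- The cap `{x ∈ K^α : ⟨x,ω⟩ ≥ λ}`. -/
noncomputable def capKα (α : ℝ) (ω : EuclideanSpace ℝ (Fin 3)) (lam : ℝ) :
    Set (EuclideanSpace ℝ (Fin 3)) :=
  {x ∈ Kα α | lam ≤ ⟪x, ω⟫}

lemma refl_pt3_mem (α : ℝ) (ω : EuclideanSpace ℝ (Fin 3)) (lam b : ℝ)
    (h : reflMap ω lam (pt3 0 b 0) ∈ Kα α) :
    |(-(2 * (b * ω 1 - lam) * ω 2))| ≤ α * (-(2 * (b * ω 1 - lam) * ω 0)) ∧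
    |b - 2 * (b * ω 1 - lam) * ω 1| ≤ α * (1 + 2 * (b * ω 1 - lam) * ω 0) := by
  have hi : ⟪ω, pt3 0 b 0⟫ = b * ω 1 := by
    rw [real_inner_comm, inner_pt3]; ring
  have he : reflMap ω lam (pt3 0 b 0) = pt3 0 b 0 - (2 * (b * ω 1 - lam)) • ω := by
    rw [reflMap, hi]
  rw [he] at h
  obtain ⟨hA, hB⟩ := h
  constructor
  · simpa [pt3, sub_eq_add_neg] using hA
  · rw [show (1 : ℝ) + 2 * (b * ω 1 - lam) * ω 0 =
        1 - (0 - 2 * (b * ω 1 - lam) * ω 0) by ring]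
    simpa [pt3, sub_eq_add_neg] using hB

set_option maxHeartbeats 1000000 in
/-- With `z₁ = (0,α,0)`, `z₂ = (0,-α,0)`: if the cap above level `λ` folds into `K^α`
and `⟨z₁,ω⟩ > λ`, `T_{λ,ω}(z₁) ∈ K^α`, then assuming additionally `⟨z₂,ω⟩ > λ` and
`T_{λ,ω}(z₂) ∈ K^α` yields a contradiction; consequently `⟨z₂,ω⟩ ≤ λ`, hence
`-λ ≤ ⟨z₁,ω⟩`, and `sup {⟨z,ω⟩ : z ∈ K^α} = ⟨z₁,ω⟩`. -/
theorem z2_below_and_sup_at_z1 (α : ℝ) (hα : 0 < α)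
    (ω : EuclideanSpace ℝ (Fin 3)) (hω : ‖ω‖ = 1) (lam : ℝ)
    (hfold : reflMap ω lam '' capKα α ω lam ⊆ Kα α)
    (h1 : lam < ⟪pt3 0 α 0, ω⟫)
    (h2 : reflMap ω lam (pt3 0 α 0) ∈ Kα α) :
    (lam < ⟪pt3 0 (-α) 0, ω⟫ → reflMap ω lam (pt3 0 (-α) 0) ∈ Kα α → False) ∧
    ⟪pt3 0 (-α) 0, ω⟫ ≤ lam ∧
    -lam ≤ ⟪pt3 0 α 0, ω⟫ ∧
    IsLUB ((fun z => ⟪z, ω⟫) '' Kα α) ⟪pt3 0 α 0, ω⟫ := by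
  have hz1 : ⟪pt3 0 α 0, ω⟫ = α * ω 1 := by rw [inner_pt3]; ring
  have hz2 : ⟪pt3 0 (-α) 0, ω⟫ = -(α * ω 1) := by rw [inner_pt3]; ring
  have hnorm : ω 0 ^ 2 + ω 1 ^ 2 + ω 2 ^ 2 = 1 := by
    have h : ⟪ω, ω⟫ = 1 := by
      rw [real_inner_self_eq_norm_mul_norm, hω]; norm_num
    rw [PiLp.inner_apply, Fin.sum_univ_three] at h
    simp only [RCLike.inner_apply, conj_trivial] at h
    nlinarith [h]
  -- consequences of h2 (the z₁ reflection)
  have ht1 : (0:ℝ) < 2 * (α * ω 1 - lam) := by rw [hz1] at h1; linarith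
  obtain ⟨c1, c2⟩ := refl_pt3_mem α ω lam α h2
  have c1' := abs_le.mp c1
  have c2' := abs_le.mp c2
  set t := 2 * (α * ω 1 - lam) with htdef
  -- |ω 2| ≤ -α * ω 0
  have hw2a : ω 2 ≤ -(α * ω 0) := by
    have := le_of_mul_le_mul_left (a := t) (by nlinarith [c1'.1] : t * ω 2 ≤ t * (-(α * ω 0))) ht1
    linarith
  have hw2b : -(α * ω 0) ≥ -(ω 2) := by
    have := le_of_mul_le_mul_left (a := t) (by nlinarith [c1'.2] : t * (-(ω 2)) ≤ t * (-(α * ω 0))) ht1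
    linarith
  have hw0 : ω 0 ≤ 0 := by
    have hαω : α * ω 0 ≤ 0 := by linarith
    nlinarith
  -- ω 1 ≥ -α * ω 0
  have hw1 : -(α * ω 0) ≤ ω 1 := by
    have := le_of_mul_le_mul_left (a := t) (by nlinarith [c2'.2] : t * (-(ω 1)) ≤ t * (α * ω 0)) ht1
    linarith
  have hw1nn : 0 ≤ ω 1 := by nlinarith
  have habs2 : |ω 2| ≤ -(α * ω 0) := abs_le.mpr ⟨by linarith, hw2a⟩
  -- main contradiction
  have main : lam < ⟪pt3 0 (-α) 0, ω⟫ → reflMap ω lam (pt3 0 (-α) 0) ∈ Kα α → False := by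
    intro hl2 h2'
    rw [hz2] at hl2
    have ht2 : (0:ℝ) < 2 * (-α * ω 1 - lam) := by linarith
    obtain ⟨d1, d2⟩ := refl_pt3_mem α ω lam (-α) h2'
    have d2' := abs_le.mp d2
    set s := 2 * (-α * ω 1 - lam) with hsdef
    have hw1' : ω 1 ≤ α * ω 0 := by
      have := le_of_mul_le_mul_left (a := s) (by nlinarith [d2'.1] : s * ω 1 ≤ s * (α * ω 0)) ht2
      linarith
    have hαω0 : α * ω 0 = 0 := le_antisymm
      (mul_nonpos_iff.mpr (Or.inl ⟨le_of_lt hα, hw0⟩)) (by linarith)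
    have h0 : ω 0 = 0 := by
      rcases mul_eq_zero.mp hαω0 with h | h
      · exact absurd h (ne_of_gt hα)
      · exact h
    have h1' : ω 1 = 0 := le_antisymm (by linarith) (by linarith)
    have h2'' : ω 2 = 0 := by
      have := habs2
      rw [h0] at this
      simpa using this
    rw [h0, h1', h2''] at hnorm
    norm_num at hnorm
  refine ⟨main, ?_, ?_, ?_⟩
  · by_contra h
    push_neg at h
    have hmem : pt3 0 (-α) 0 ∈ Kα α := by
      constructor <;> simp [pt3, abs_of_pos hα, le_of_lt hα]
    exact main h (hfold ⟨pt3 0 (-α) 0, ⟨hmem, le_of_lt h⟩, rfl⟩)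
  · have : ⟪pt3 0 (-α) 0, ω⟫ ≤ lam := by
      by_contra h
      push_neg at h
      have hmem : pt3 0 (-α) 0 ∈ Kα α := by
        constructor <;> simp [pt3, abs_of_pos hα, le_of_lt hα]
      exact main h (hfold ⟨pt3 0 (-α) 0, ⟨hmem, le_of_lt h⟩, rfl⟩)
    rw [hz2] at this; rw [hz1]; linarith
  · constructor
    · rintro y ⟨z, ⟨hzA, hzB⟩, rfl⟩
      have hzA' := abs_le.mp hzA
      have hzB' := abs_le.mp hzB
      have hz0 : 0 ≤ z 0 := by nlinarith [abs_nonneg (z 2)]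
      have hinner : ⟪z, ω⟫ = z 0 * ω 0 + z 1 * ω 1 + z 2 * ω 2 := by
        simp [PiLp.inner_apply, Fin.sum_univ_three, mul_comm]
      show ⟪z, ω⟫ ≤ ⟪pt3 0 α 0, ω⟫
      rw [hinner, hz1]
      nlinarith [mul_nonneg (by linarith : (0:ℝ) ≤ α * z 0 - z 2) (by nlinarith : (0:ℝ) ≤ ω 1 + ω 2),
        mul_nonneg (by linarith : (0:ℝ) ≤ α * z 0 + z 2) (by nlinarith : (0:ℝ) ≤ ω 1 - ω 2),
        mul_nonneg (by linarith : (0:ℝ) ≤ α * (1 - z 0) - z 1) hw1nn,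
        mul_nonneg hz0 (by linarith : (0:ℝ) ≤ -(ω 0))]
    · intro b hb
      have hmem : pt3 0 α 0 ∈ Kα α := by
        constructor <;> simp [pt3, abs_of_pos hα, le_of_lt hα]
      exact hb ⟨pt3 0 α 0, hmem, rfl⟩
end
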